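/- Let v(t,r) := ((1 + r·cos(t/2))·cos t, (1 + r·cos(t/2))·sin t, r·sin(t/2)) and P_∞ := [0,2π) × ℝ. For (x,y) ∈ ℝ², define Z_v(x,y) := { z ∈ ℝ : (x,y,z) ∈ v(P_∞) }. Then for every y ∈ ℝ with y ≠ 0, the set Z_v(−1,y) has exactly one element. -/

import Mathlib

open Real Set

theorem common_mobius_cross_section_x_neg_one
    (v : ℝ × ℝ → ℝ × ℝ × ℝ)
    (hv : ∀ t r : ℝ, v (t, r) =
      ((1 + r * Real.cos (t / 2)) * Real.cos t,
       (1 + r * Real.cos (t / 2)) * Real.sin t,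
       r * Real.sin (t / 2)))
    (Pinf : Set (ℝ × ℝ)) (hPinf : Pinf = Set.Ico 0 (2 * π) ×ˢ Set.univ)
    (Z : ℝ → ℝ → Set ℝ)
    (hZ : ∀ x y : ℝ, Z x y = {z : ℝ | (x, y, z) ∈ v '' Pinf}) :
    ∀ y : ℝ, y ≠ 0 → (Z (-1) y).encard = 1 := by
  intro y hy
  rw [hZ]
  have hset : {z : ℝ | ((-1:ℝ), y, z) ∈ v '' Pinf} = {y} := by
    ext z
    simp only [Set.mem_setOf_eq, Set.mem_image, Set.mem_singleton_iff, hPinf,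
      Set.mem_prod, Set.mem_Ico, Set.mem_univ, and_true, Prod.exists]
    constructor
    · rintro ⟨t, r, ⟨ht0, ht2⟩, hvtr⟩
      rw [hv] at hvtr
      have h1 : (1 + r * Real.cos (t / 2)) * Real.cos t = -1 := congrArg Prod.fst hvtr
      have h2 : (1 + r * Real.cos (t / 2)) * Real.sin t = y := congrArg (Prod.fst ∘ Prod.snd) hvtr
      have h3 : r * Real.sin (t / 2) = z := congrArg (Prod.snd ∘ Prod.snd) hvtr
      set c := Real.cos (t / 2) with hc
      set s := Real.sin (t / 2) with hs
      have hcs : s ^ 2 + c ^ 2 = 1 := Real.sin_sq_add_cos_sq _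
      have hct : Real.cos t = 2 * c ^ 2 - 1 := by
        rw [hc]; rw [show t = 2 * (t / 2) by ring, Real.cos_two_mul]; ring_nf
      have hst : Real.sin t = 2 * s * c := by
        rw [hs, hc]; rw [show t = 2 * (t / 2) by ring, Real.sin_two_mul]; ring_nf
      rw [hct] at h1
      rw [hst] at h2
      have hcne : c ≠ 0 := by
        intro h0
        rw [h0] at h2
        apply hy
        linarith [h2]
      have h4 : c * (2 * c - r * (1 - 2 * c ^ 2)) = 0 := by linear_combination h1
      have h5 : 2 * c - r * (1 - 2 * c ^ 2) = 0 := by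
        rcases mul_eq_zero.1 h4 with h | h
        · exact absurd h hcne
        · exact h
      linear_combination -h3 + h2 - s * h5
    · rintro rfl
      set ρ := Real.sqrt (1 + z ^ 2) with hρ
      have hρ2 : ρ ^ 2 = 1 + z ^ 2 := Real.sq_sqrt (by positivity)
      have hρ1 : 1 ≤ ρ := by nlinarith [Real.sqrt_nonneg (1 + z ^ 2)]
      set u := (ρ + 1) / z with hu
      set W := Real.sqrt (1 + u ^ 2) with hW
      have hW2 : W ^ 2 = 1 + u ^ 2 := Real.sq_sqrt (by positivity)
      have hWpos : 0 < W := Real.sqrt_pos.2 (by positivity)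
      have hca : Real.cos (Real.arctan u) = 1 / W := Real.cos_arctan u
      have hsa : Real.sin (Real.arctan u) = u / W := Real.sin_arctan u
      have huz : u * z = ρ + 1 := by rw [hu]; field_simp
      have hz2 : z ^ 2 ≠ 0 := pow_ne_zero 2 hy
      have h1u : (1:ℝ) + u ^ 2 ≠ 0 := by positivity
      have keyA : ρ * (1 - u ^ 2) = -(1 + u ^ 2) := by
        have h : (ρ * (1 - u ^ 2) + (1 + u ^ 2)) * z ^ 2 = 0 := by
          linear_combination (-(ρ + 1)) * hρ2 + (-(ρ - 1) * (u * z + ρ + 1)) * huz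
        have := (mul_eq_zero.1 h).resolve_right hz2
        linarith
      have keyB : 2 * ρ * u = z * (1 + u ^ 2) := by
        have h : (2 * ρ * u - z * (1 + u ^ 2)) * z = 0 := by
          linear_combination hρ2 + (2 * ρ - u * z - ρ - 1) * huz
        have := (mul_eq_zero.1 h).resolve_right hy
        linarith
      have key3 : (ρ - 1) * u = z := by
        have h : ((ρ - 1) * u - z) * z = 0 := by
          linear_combination hρ2 + (ρ - 1) * huz
        have := (mul_eq_zero.1 h).resolve_right hy
        linarith
      have key1 : ρ * (2 * (1 / W) ^ 2 - 1) = -1 := by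
        rw [div_pow, one_pow, hW2]
        field_simp
        linear_combination keyA
      have key2 : ρ * (2 * (u / W) * (1 / W)) = z := by
        have e : ρ * (2 * (u / W) * (1 / W)) = 2 * ρ * u / W ^ 2 := by ring
        rw [e, hW2, div_eq_iff h1u]
        linear_combination keyB
      rcases lt_or_gt_of_ne hy with hneg | hpos
      · -- z < 0 : t = 2 arctan u + 2π, r = -(ρ-1) W
        have hu0 : u < 0 := div_neg_of_pos_of_neg (by linarith) hneg
        have ha : Real.arctan u < 0 := by
          rw [← Real.arctan_zero]; exact Real.arctan_strictMono hu0
        have ha2 : -(π / 2) < Real.arctan u := Real.neg_pi_div_two_lt_arctan u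
        refine ⟨2 * Real.arctan u + 2 * π, -((ρ - 1) * W),
          ⟨by linarith [Real.pi_pos], by linarith⟩, ?_⟩
        rw [hv]
        have ht2 : (2 * Real.arctan u + 2 * π) / 2 = Real.arctan u + π := by ring
        have ht3 : 2 * Real.arctan u + 2 * π = 2 * Real.arctan u + 2 * π := rfl
        rw [ht2, Real.cos_add_pi, Real.sin_add_pi, hca, hsa,
          show 2 * Real.arctan u + 2 * π = (2 * Real.arctan u) + 2 * π by ring,
          Real.cos_add_two_pi, Real.sin_add_two_pi,
          Real.cos_two_mul, Real.sin_two_mul, hca, hsa]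
        have hWne : W ≠ 0 := ne_of_gt hWpos
        have hr : 1 + -((ρ - 1) * W) * -(1 / W) = ρ := by field_simp; ring
        refine Prod.ext ?_ (Prod.ext ?_ ?_)
        · show (1 + -((ρ - 1) * W) * -(1 / W)) * (2 * (1 / W) ^ 2 - 1) = -1
          rw [hr]; exact key1
        · show (1 + -((ρ - 1) * W) * -(1 / W)) * (2 * (u / W) * (1 / W)) = z
          rw [hr]; exact key2
        · show -((ρ - 1) * W) * -(u / W) = z
          have e : -((ρ - 1) * W) * -(u / W) = (ρ - 1) * u * (W / W) := by ring
          rw [e, div_self hWne, mul_one]; exact key3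
      · -- z > 0 : t = 2 arctan u
        have hu0 : 0 < u := div_pos (by linarith) hpos
        have ha : 0 < Real.arctan u := by
          rw [← Real.arctan_zero]; exact Real.arctan_strictMono hu0
        have ha2 : Real.arctan u < π / 2 := Real.arctan_lt_pi_div_two u
        refine ⟨2 * Real.arctan u, (ρ - 1) * W, ⟨by linarith, by linarith [Real.pi_pos]⟩, ?_⟩
        rw [hv]
        have ht2 : 2 * Real.arctan u / 2 = Real.arctan u := by ring
        rw [ht2, Real.cos_two_mul, Real.sin_two_mul, hca, hsa]
        have hWne : W ≠ 0 := ne_of_gt hWpos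
        have hr : 1 + (ρ - 1) * W * (1 / W) = ρ := by field_simp; ring
        refine Prod.ext ?_ (Prod.ext ?_ ?_)
        · show (1 + (ρ - 1) * W * (1 / W)) * (2 * (1 / W) ^ 2 - 1) = -1
          rw [hr]; exact key1
        · show (1 + (ρ - 1) * W * (1 / W)) * (2 * (u / W) * (1 / W)) = z
          rw [hr]; exact key2
        · show (ρ - 1) * W * (u / W) = z
          have e : (ρ - 1) * W * (u / W) = (ρ - 1) * u * (W / W) := by ring
          rw [e, div_self hWne, mul_one]; exact key3
  rw [hset]
  exact Set.encard_singleton y
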